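/- Let b > 0 and Z ~ Laplace(0,b). If f is twice continuously differentiable with polynomially bounded f, f', f'', and f(q+Z) is itself unbiased for f(q) for all q ∈ ℝ (i.e. E[f(q+Z)] = f(q) for all q), then f'' ≡ 0, i.e. f is affine. -/

import Mathlib

open MeasureTheory Real

/-- Density of the Laplace(0,b) distribution. -/
noncomputable def laplacePDF (b x : ℝ) : ℝ := (1 / (2 * b)) * Real.exp (-|x| / b)

/-- A function has at most polynomial growth. -/
def PolyGrowth (f : ℝ → ℝ) : Prop :=
  ∃ C n, ∀ x : ℝ, |f x| ≤ C * (1 + |x|) ^ (n : ℕ)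

open Set

lemma intOn_exp_Iic {δ : ℝ} (hδ : 0 < δ) (q : ℝ) :
    IntegrableOn (fun x => Real.exp (δ * x)) (Iic q) := by
  rw [← MeasurePreserving.integrableOn_comp_preimage
      (Measure.measurePreserving_neg (volume : Measure ℝ))
      (Homeomorph.neg ℝ).measurableEmbedding]
  have hset : ((fun x : ℝ => -x) ⁻¹' Iic q : Set ℝ) = Ici (-q) := by
    ext x; simp [le_neg]
  rw [show (Neg.neg ⁻¹' Iic q : Set ℝ) = Ici (-q) from hset]
  have h := exp_neg_integrableOn_Ioi (-q) hδ
  rw [integrableOn_Ici_iff_integrableOn_Ioi]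
  apply h.congr_fun _ measurableSet_Ioi
  intro x _; simp [Function.comp_def, neg_mul, mul_neg]

lemma poly_le_exp (n : ℕ) {δ : ℝ} (hδ : 0 < δ) :
    ∃ K : ℝ, 0 < K ∧ ∀ t : ℝ, 0 ≤ t → (1 + t) ^ n ≤ K * Real.exp (δ * t) := by
  set ε : ℝ := min 1 (δ / (n + 1)) with hε_def
  have hε : 0 < ε := lt_min one_pos (by positivity)
  have hε1 : ε ≤ 1 := min_le_left _ _
  have hεδ : (n : ℝ) * ε ≤ δ := by
    have h1 : (n : ℝ) * ε ≤ n * (δ / (n + 1)) := by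
      apply mul_le_mul_of_nonneg_left (min_le_right _ _) (Nat.cast_nonneg n)
    have h2 : (n : ℝ) * (δ / (n + 1)) ≤ δ := by
      rw [div_eq_inv_mul, ← mul_assoc]
      have : (n : ℝ) * ((n : ℝ) + 1)⁻¹ ≤ 1 := by
        rw [mul_inv_le_iff₀ (by positivity), one_mul]; linarith
      nlinarith [hδ.le]
    linarith
  refine ⟨(1 / ε) ^ n, by positivity, fun t ht => ?_⟩
  have hbasic : 1 + t ≤ (1 / ε) * Real.exp (ε * t) := by
    have h1 : ε * t + 1 ≤ Real.exp (ε * t) := Real.add_one_le_exp _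
    have h2 : (1 / ε) * (ε * t + 1) ≤ (1 / ε) * Real.exp (ε * t) := by
      apply mul_le_mul_of_nonneg_left h1 (by positivity)
    have h3 : (1 / ε) * (ε * t + 1) = t + 1 / ε := by field_simp
    have h4 : (1 : ℝ) ≤ 1 / ε := by rw [le_div_iff₀ hε]; linarith
    linarith
  calc (1 + t) ^ n ≤ ((1 / ε) * Real.exp (ε * t)) ^ n := by
        apply pow_le_pow_left₀ (by linarith) hbasic
    _ = (1 / ε) ^ n * Real.exp (ε * t) ^ n := mul_pow _ _ _
    _ = (1 / ε) ^ n * Real.exp ((n : ℝ) * (ε * t)) := by rw [← Real.exp_nat_mul]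
    _ ≤ (1 / ε) ^ n * Real.exp (δ * t) := by
        apply mul_le_mul_of_nonneg_left _ (by positivity)
        apply Real.exp_le_exp.2
        calc (n : ℝ) * (ε * t) = ((n : ℝ) * ε) * t := by ring
          _ ≤ δ * t := mul_le_mul_of_nonneg_right hεδ ht

lemma growth_bound {g : ℝ → ℝ} (hpg : PolyGrowth g) {δ : ℝ} (hδ : 0 < δ) :
    ∃ K : ℝ, 0 ≤ K ∧ ∀ x : ℝ, |g x| ≤ K * Real.exp (δ * |x|) := by
  obtain ⟨C, n, hC⟩ := hpg
  obtain ⟨K, hK, hKb⟩ := poly_le_exp n hδ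
  refine ⟨|C| * K, by positivity, fun x => ?_⟩
  calc |g x| ≤ C * (1 + |x|) ^ n := hC x
    _ ≤ |C| * (1 + |x|) ^ n := by
        apply mul_le_mul_of_nonneg_right (le_abs_self C) (by positivity)
    _ ≤ |C| * (K * Real.exp (δ * |x|)) := by
        apply mul_le_mul_of_nonneg_left (hKb _ (abs_nonneg x)) (abs_nonneg C)
    _ = |C| * K * Real.exp (δ * |x|) := by ring

lemma key_int {g : ℝ → ℝ} (hc : Continuous g) (hpg : PolyGrowth g)
    {b : ℝ} (hb : 0 < b) (q : ℝ) :
    IntegrableOn (fun x => g x * Real.exp (x / b)) (Iic q) := by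
  set δ : ℝ := 1 / (2 * b) with hδ_def
  have hδ : 0 < δ := by positivity
  obtain ⟨K, hK0, hK⟩ := growth_bound hpg hδ
  set M : ℝ := K * Real.exp (δ * (|q| + q)) with hM_def
  apply Integrable.mono' ((intOn_exp_Iic hδ q).const_mul M)
  · exact (hc.mul (Real.continuous_exp.comp (continuous_id.div_const b))).aestronglyMeasurable
  · filter_upwards [ae_restrict_mem measurableSet_Iic] with x hx
    have hx' : x ≤ q := hx
    have habs : |x| ≤ |q| + (q - x) := by
      have := abs_sub_abs_le_abs_sub x q
      have h2 : |x - q| = q - x := by rw [abs_sub_comm, abs_of_nonneg (by linarith)]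
      calc |x| ≤ |q| + |x - q| := by
            have := abs_add_le q (x - q); simpa using this
        _ = |q| + (q - x) := by rw [h2]
    have h1 : ‖g x * Real.exp (x / b)‖ = |g x| * Real.exp (x / b) := by
      rw [norm_mul, Real.norm_eq_abs, Real.norm_eq_abs, abs_of_pos (Real.exp_pos _)]
    rw [h1]
    calc |g x| * Real.exp (x / b) ≤ (K * Real.exp (δ * |x|)) * Real.exp (x / b) := by
          apply mul_le_mul_of_nonneg_right (hK x) (Real.exp_pos _).le
      _ = K * Real.exp (δ * |x| + x / b) := by rw [Real.exp_add]; ring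
      _ ≤ K * Real.exp (δ * (|q| + q) + δ * x) := by
          apply mul_le_mul_of_nonneg_left _ hK0
          apply Real.exp_le_exp.2
          have hir : x / b = 2 * δ * x := by
            rw [hδ_def]; field_simp
          rw [hir]
          nlinarith [habs, hδ]
      _ = M * Real.exp (δ * x) := by rw [Real.exp_add]; ring

lemma key_int' {g : ℝ → ℝ} (hc : Continuous g) (hpg : PolyGrowth g)
    {b : ℝ} (hb : 0 < b) (q : ℝ) :
    IntegrableOn (fun x => g x * Real.exp (-x / b)) (Ioi q) := by
  have h1 : Continuous (fun x => g (-x)) := hc.comp continuous_neg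
  have h2 : PolyGrowth (fun x => g (-x)) := by
    obtain ⟨C, n, hC⟩ := hpg
    exact ⟨C, n, fun x => by simpa [abs_neg] using hC (-x)⟩
  have h3 := key_int h1 h2 hb (-q)
  rw [← MeasurePreserving.integrableOn_comp_preimage
      (Measure.measurePreserving_neg (volume : Measure ℝ))
      (Homeomorph.neg ℝ).measurableEmbedding]
  have hset : (Neg.neg ⁻¹' Ioi q : Set ℝ) = Iio (-q) := by
    ext x; simp [lt_neg]
  rw [hset]
  apply (h3.mono_set Iio_subset_Iic_self).congr_fun _ measurableSet_Iio
  intro x _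
  simp [Function.comp_def, neg_neg, neg_div]

/-- If the plug-in estimator `f(q+Z)` is unbiased for `f(q)` for all `q` under
Laplace(0,b) noise, then `f'' ≡ 0`, i.e. `f` is affine. -/
theorem plugin_unbiased_iff_affine (b : ℝ) (hb : 0 < b) (f : ℝ → ℝ)
    (hf : ContDiff ℝ 2 f)
    (hg0 : PolyGrowth f) (hg1 : PolyGrowth (deriv f)) (hg2 : PolyGrowth (deriv (deriv f)))
    (hunb : ∀ q : ℝ, ∫ z : ℝ, f (q + z) * laplacePDF b z = f q) :
    (∀ x : ℝ, deriv (deriv f) x = 0) ∧ ∃ c d : ℝ, ∀ x : ℝ, f x = c * x + d := by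
  have hb' : b ≠ 0 := ne_of_gt hb
  have hfc : Continuous f := hf.continuous
  set g : ℝ → ℝ := fun x => f x * Real.exp (x / b) with hg_def
  set h : ℝ → ℝ := fun x => f x * Real.exp (-x / b) with hh_def
  set k : ℝ → ℝ := fun x => f (-x) * Real.exp (x / b) with hk_def
  have hgc : Continuous g := hfc.mul (Real.continuous_exp.comp (continuous_id.div_const b))
  have hfnegc : Continuous (fun x => f (-x)) := hfc.comp continuous_neg
  have hfnegpg : PolyGrowth (fun x => f (-x)) := by
    obtain ⟨C, n, hC⟩ := hg0; exact ⟨C, n, fun x => by simpa [abs_neg] using hC (-x)⟩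
  have hkc : Continuous k := hfnegc.mul (Real.continuous_exp.comp (continuous_id.div_const b))
  have hAint : ∀ u, IntegrableOn g (Iic u) := fun u => key_int hfc hg0 hb u
  have hBint : ∀ u, IntegrableOn h (Ioi u) := fun u => key_int' hfc hg0 hb u
  have hkint : ∀ u, IntegrableOn k (Iic u) := fun u => key_int hfnegc hfnegpg hb u
  set A : ℝ → ℝ := fun u => ∫ x in Iic u, g x with hA_def
  set B : ℝ → ℝ := fun u => ∫ x in Ioi u, h x with hB_def
  set D : ℝ → ℝ := fun u => ∫ x in Iic u, k x with hD_def
  -- the main identity coming from unbiasedness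
  have hIdent : ∀ q, Real.exp (-q / b) * A q + Real.exp (q / b) * B q = 2 * b * f q := by
    intro q
    have hstep1 : (∫ x : ℝ, f x * laplacePDF b (x - q)) = f q := by
      have e1 : (∫ x : ℝ, f x * laplacePDF b (x - q))
          = ∫ x : ℝ, (fun z => f (q + z) * laplacePDF b z) (x - q) := by
        congr 1; funext x; simp
      rw [e1, integral_sub_right_eq_self (fun z => f (q + z) * laplacePDF b z) q]
      exact hunb q
    have hEqIic : Set.EqOn (fun x => f x * laplacePDF b (x - q))
        (fun x => (1 / (2 * b) * Real.exp (-q / b)) * g x) (Iic q) := by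
      intro x hx
      have hx' : x - q ≤ 0 := by simp only [mem_Iic] at hx; linarith
      simp only [laplacePDF, hg_def]
      rw [abs_of_nonpos hx',
        show -(-(x - q)) / b = x / b + -q / b by ring, Real.exp_add]
      ring
    have hEqIoi : Set.EqOn (fun x => f x * laplacePDF b (x - q))
        (fun x => (1 / (2 * b) * Real.exp (q / b)) * h x) (Ioi q) := by
      intro x hx
      have hx' : (0:ℝ) ≤ x - q := by simp only [mem_Ioi] at hx; linarith
      simp only [laplacePDF, hh_def]
      rw [abs_of_nonneg hx',
        show -(x - q) / b = -x / b + q / b by ring, Real.exp_add]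
      ring
    have hIic : IntegrableOn (fun x => f x * laplacePDF b (x - q)) (Iic q) :=
      IntegrableOn.congr_fun ((hAint q).const_mul _) hEqIic.symm measurableSet_Iic
    have hIoi : IntegrableOn (fun x => f x * laplacePDF b (x - q)) (Ioi q) :=
      IntegrableOn.congr_fun ((hBint q).const_mul _) hEqIoi.symm measurableSet_Ioi
    have hsplit := intervalIntegral.integral_Iic_add_Ioi hIic hIoi
    have hv1 : ∫ x in Iic q, f x * laplacePDF b (x - q)
        = (1 / (2 * b) * Real.exp (-q / b)) * A q := by
      rw [setIntegral_congr_fun measurableSet_Iic hEqIic, MeasureTheory.integral_const_mul]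
    have hv2 : ∫ x in Ioi q, f x * laplacePDF b (x - q)
        = (1 / (2 * b) * Real.exp (q / b)) * B q := by
      rw [setIntegral_congr_fun measurableSet_Ioi hEqIoi, MeasureTheory.integral_const_mul]
    rw [hv1, hv2, hstep1] at hsplit
    field_simp at hsplit ⊢
    linarith
  -- fundamental theorem of calculus: derivatives of A, B
  have hA' : ∀ p, HasDerivAt A (g p) p := by
    intro p
    have hint : IntervalIntegrable g volume 0 p := hgc.intervalIntegrable 0 p
    have hd := intervalIntegral.integral_hasDerivAt_right hint
      (hgc.stronglyMeasurableAtFilter volume (nhds p)) hgc.continuousAt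
    have heq : ∀ u, A u = A 0 + ∫ x in (0:ℝ)..u, g x := by
      intro u
      have := intervalIntegral.integral_Iic_sub_Iic (hAint 0) (hAint u)
      simp only [hA_def] at this ⊢
      linarith
    exact (hd.const_add (A 0)).congr_of_eventuallyEq (Filter.Eventually.of_forall heq)
  have hD' : ∀ p, HasDerivAt D (k p) p := by
    intro p
    have hint : IntervalIntegrable k volume 0 p := hkc.intervalIntegrable 0 p
    have hd := intervalIntegral.integral_hasDerivAt_right hint
      (hkc.stronglyMeasurableAtFilter volume (nhds p)) hkc.continuousAt
    have heq : ∀ u, D u = D 0 + ∫ x in (0:ℝ)..u, k x := by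
      intro u
      have := intervalIntegral.integral_Iic_sub_Iic (hkint 0) (hkint u)
      simp only [hD_def] at this ⊢
      linarith
    exact (hd.const_add (D 0)).congr_of_eventuallyEq (Filter.Eventually.of_forall heq)
  have hBD : ∀ u, B u = D (-u) := by
    intro u
    have hcn := integral_comp_neg_Ioi u k
    simp only [hB_def, hD_def]
    rw [← hcn]
    apply setIntegral_congr_fun measurableSet_Ioi
    intro x _
    simp only [hh_def, hk_def, neg_neg]
  have hB' : ∀ p, HasDerivAt B (-(h p)) p := by
    intro p
    have hcomp : HasDerivAt (fun u => D (-u)) (k (-p) * (-1)) p :=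
      HasDerivAt.comp p (hD' (-p)) (hasDerivAt_neg p)
    have hval : k (-p) * (-1) = -(h p) := by
      simp only [hk_def, hh_def, neg_neg]; ring
    rw [hval] at hcomp
    exact hcomp.congr_of_eventuallyEq (Filter.Eventually.of_forall hBD)
  -- derivative helpers for the exponentials
  have hE1 : ∀ q : ℝ, HasDerivAt (fun u : ℝ => Real.exp (-u / b))
      (Real.exp (-q / b) * (-1 / b)) q := fun q =>
    (((hasDerivAt_id q).neg).div_const b).exp
  have hE2 : ∀ q : ℝ, HasDerivAt (fun u : ℝ => Real.exp (u / b))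
      (Real.exp (q / b) * (1 / b)) q := fun q =>
    ((hasDerivAt_id q).div_const b).exp
  -- first derivative of f
  have hf1 : ∀ q, HasDerivAt f
      (1 / (2 * b ^ 2) * (Real.exp (q / b) * B q - Real.exp (-q / b) * A q)) q := by
    intro q
    have hprod : HasDerivAt
        (fun u => 1 / (2 * b) * (Real.exp (-u / b) * A u + Real.exp (u / b) * B u))
        (1 / (2 * b) * ((Real.exp (-q / b) * (-1 / b) * A q + Real.exp (-q / b) * g q)
          + (Real.exp (q / b) * (1 / b) * B q + Real.exp (q / b) * -(h q)))) q :=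
      ((((hE1 q).mul (hA' q))).add ((hE2 q).mul (hB' q))).const_mul _
    have hfeq : f =ᶠ[nhds q]
        (fun u => 1 / (2 * b) * (Real.exp (-u / b) * A u + Real.exp (u / b) * B u)) := by
      apply Filter.Eventually.of_forall
      intro u
      show f u = 1 / (2 * b) * (Real.exp (-u / b) * A u + Real.exp (u / b) * B u)
      rw [hIdent u]
      field_simp
    have hval : (1 / (2 * b) * ((Real.exp (-q / b) * (-1 / b) * A q + Real.exp (-q / b) * g q)
          + (Real.exp (q / b) * (1 / b) * B q + Real.exp (q / b) * -(h q))))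
        = 1 / (2 * b ^ 2) * (Real.exp (q / b) * B q - Real.exp (-q / b) * A q) := by
      simp only [hg_def, hh_def]
      field_simp
      ring
    rw [hval] at hprod
    exact hprod.congr_of_eventuallyEq hfeq
  have hderiv1 : deriv f
      = fun q => 1 / (2 * b ^ 2) * (Real.exp (q / b) * B q - Real.exp (-q / b) * A q) :=
    funext fun q => (hf1 q).deriv
  -- second derivative of f vanishes
  have hf2 : ∀ q, HasDerivAt (deriv f) 0 q := by
    intro q
    have hprod : HasDerivAt
        (fun u => 1 / (2 * b ^ 2) * (Real.exp (u / b) * B u - Real.exp (-u / b) * A u))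
        (1 / (2 * b ^ 2) * ((Real.exp (q / b) * (1 / b) * B q + Real.exp (q / b) * -(h q))
          - (Real.exp (-q / b) * (-1 / b) * A q + Real.exp (-q / b) * g q))) q :=
      (((hE2 q).mul (hB' q)).sub ((hE1 q).mul (hA' q))).const_mul _
    have hEE : Real.exp (-q / b) * Real.exp (q / b) = 1 := by
      rw [← Real.exp_add, show -q / b + q / b = 0 by ring, Real.exp_zero]
    have hId := hIdent q
    have hval : (1 / (2 * b ^ 2) * ((Real.exp (q / b) * (1 / b) * B q + Real.exp (q / b) * -(h q))
          - (Real.exp (-q / b) * (-1 / b) * A q + Real.exp (-q / b) * g q))) = 0 := by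
      simp only [hg_def, hh_def]
      linear_combination (norm := (field_simp; ring)) (1 / (2 * b ^ 3)) * hId - (f q / b ^ 2) * hEE
    rw [hval] at hprod
    rw [hderiv1]
    exact hprod
  have hsecond : ∀ x, deriv (deriv f) x = 0 := fun x => (hf2 x).deriv
  refine ⟨hsecond, deriv f 0, f 0, fun x => ?_⟩
  have hdf_diff : Differentiable ℝ (deriv f) := fun x => (hf2 x).differentiableAt
  have hcst : ∀ y, deriv f y = deriv f 0 := fun y =>
    is_const_of_deriv_eq_zero hdf_diff hsecond y 0
  set c := deriv f 0 with hc_def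
  have hF : ∀ y, HasDerivAt (fun z => f z - c * z) 0 y := by
    intro y
    have hv : (1 / (2 * b ^ 2) * (Real.exp (y / b) * B y - Real.exp (-y / b) * A y)) = c := by
      rw [← (hf1 y).deriv]; exact hcst y
    have h1 : HasDerivAt f c y := hv ▸ hf1 y
    have h2 : HasDerivAt (fun z => c * z) c y := by
      simpa using (hasDerivAt_id y).const_mul c
    have := h1.sub h2; rw [sub_self] at this; exact this
  have hconst := is_const_of_deriv_eq_zero (f := fun z => f z - c * z)
    (fun y => (hF y).differentiableAt) (fun y => (hF y).deriv) x 0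
  simp only [mul_zero, sub_zero] at hconst
  linarith
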